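/- The function f(t) = ₂F₁(1/3, 2/3; 1; t) / ₂F₁(1/3, 2/3; 1; 1-t) is a strictly increasing continuous bijection from (0,1) onto (0,∞). In particular, for every positive real r there exists a unique t ∈ (0,1) with f(t) = r. -/

import Mathlib

open Real Set

/-- Gauss hypergeometric function `₂F₁(a,b;c;z)` via the Euler integral
representation, valid for `c > b > 0` (and all real `z < 1`). -/
noncomputable def hyp2F1 (a b c z : ℝ) : ℝ :=
  (Real.Gamma c / (Real.Gamma b * Real.Gamma (c - b))) *
    ∫ t in (0:ℝ)..1, t ^ (b - 1) * (1 - t) ^ (c - b - 1) * (1 - z * t) ^ (-a)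

noncomputable def fratio (t : ℝ) : ℝ :=
  hyp2F1 (1/3) (2/3) 1 t / hyp2F1 (1/3) (2/3) 1 (1 - t)

open MeasureTheory intervalIntegral Filter Topology

noncomputable def gg (z t : ℝ) : ℝ :=
  t ^ (-(1/3) : ℝ) * (1 - t) ^ (-(2/3) : ℝ) * (1 - z * t) ^ (-(1/3) : ℝ)

noncomputable def Ifun (z : ℝ) : ℝ := ∫ t in (0:ℝ)..1, gg z t

lemma hyp_eq (z : ℝ) :
    hyp2F1 (1/3) (2/3) 1 z
      = (Real.Gamma 1 / (Real.Gamma (2/3) * Real.Gamma (1/3))) * Ifun z := by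
  unfold hyp2F1 Ifun gg
  norm_num

lemma fratio_eq (t : ℝ) : fratio t = Ifun t / Ifun (1 - t) := by
  have hc : (0:ℝ) < Real.Gamma 1 / (Real.Gamma (2/3) * Real.Gamma (1/3)) := by
    apply div_pos (Real.Gamma_pos_of_pos one_pos)
    exact mul_pos (Real.Gamma_pos_of_pos (by norm_num)) (Real.Gamma_pos_of_pos (by norm_num))
  rw [fratio, hyp_eq, hyp_eq, mul_div_mul_left _ _ hc.ne']

/-- Beta-type integrability. -/
lemma beta_integrable {p q : ℝ} (hp : -1 < p) (hq : -1 < q) :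
    IntervalIntegrable (fun x => x ^ p * (1 - x) ^ q) volume 0 1 := by
  have key : ∀ (p q : ℝ), -1 < p →
      IntervalIntegrable (fun x => x ^ p * (1 - x) ^ q) volume 0 (1/2) := by
    intro p q hp
    apply (intervalIntegral.intervalIntegrable_rpow' hp).mul_continuousOn
    apply ContinuousOn.rpow_const
    · exact (continuous_const.sub continuous_id).continuousOn
    · intro x hx
      rw [Set.uIcc_of_le (by norm_num : (0:ℝ) ≤ 1/2)] at hx
      left
      have : x ≤ 1/2 := hx.2
      intro h; nlinarith [h]
  refine (key p q hp).trans ?_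
  have h2 := (key q p hq).comp_sub_left 1
  norm_num at h2
  have hfun : (fun x : ℝ => x ^ p * (1 - x) ^ q) = (fun x : ℝ => (1 - x) ^ q * x ^ p) := by
    funext x; exact mul_comm _ _
  rw [hfun]
  exact h2.symm

lemma zt_lt_one {z t : ℝ} (hz : z < 1) (ht0 : 0 ≤ t) (ht1 : t ≤ 1) : z * t < 1 := by
  rcases le_or_gt z 0 with h | h
  · nlinarith
  · nlinarith

lemma gg_integrable {z : ℝ} (hz : z < 1) : IntervalIntegrable (gg z) volume 0 1 := by
  apply (beta_integrable (by norm_num : (-1:ℝ) < -(1/3)) (by norm_num : (-1:ℝ) < -(2/3))).mul_continuousOn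
  apply ContinuousOn.rpow_const
  · exact (continuous_const.sub (continuous_const.mul continuous_id)).continuousOn
  · intro t ht
    rw [Set.uIcc_of_le (by norm_num : (0:ℝ) ≤ 1)] at ht
    left
    have := zt_lt_one hz ht.1 ht.2
    intro h; nlinarith [h]

lemma gg_pos {z t : ℝ} (hz : z < 1) (ht : t ∈ Ioo (0:ℝ) 1) : 0 < gg z t := by
  have h1 : (0:ℝ) < t := ht.1
  have h2 : t < 1 := ht.2
  have h3 : 0 < 1 - z * t := by have := zt_lt_one hz h1.le h2.le; linarith
  exact mul_pos (mul_pos (Real.rpow_pos_of_pos h1 _) (Real.rpow_pos_of_pos (by linarith) _))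
    (Real.rpow_pos_of_pos h3 _)

lemma Ifun_pos {z : ℝ} (hz : z < 1) : 0 < Ifun z :=
  intervalIntegral_pos_of_pos_on (gg_integrable hz) (fun t ht => gg_pos hz ht) one_pos

lemma Ifun_mono {z₁ z₂ : ℝ} (h12 : z₁ ≤ z₂) (hz : z₂ < 1) : Ifun z₁ ≤ Ifun z₂ := by
  apply intervalIntegral.integral_mono_on (by norm_num) (gg_integrable (lt_of_le_of_lt h12 hz))
    (gg_integrable hz)
  intro t ht
  unfold gg
  apply mul_le_mul_of_nonneg_left _ (mul_nonneg (Real.rpow_nonneg ht.1 _)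
    (Real.rpow_nonneg (by linarith [ht.2]) _))
  rcases eq_or_lt_of_le ht.1 with h | h
  · rw [← h]; simp
  · have hb : 0 < 1 - z₂ * t := by have := zt_lt_one hz ht.1 ht.2; linarith
    exact Real.rpow_le_rpow_of_nonpos hb (by nlinarith) (by norm_num)

lemma Ifun_strict_mono {z₁ z₂ : ℝ} (h12 : z₁ < z₂) (hz : z₂ < 1) : Ifun z₁ < Ifun z₂ := by
  have h1 : z₁ < 1 := h12.trans hz
  have hdiff : 0 < ∫ t in (0:ℝ)..1, (gg z₂ t - gg z₁ t) := by
    apply intervalIntegral_pos_of_pos_on ((gg_integrable hz).sub (gg_integrable h1)) _ one_pos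
    intro t ht
    have h3 : 0 < 1 - z₂ * t := by have := zt_lt_one hz ht.1.le ht.2.le; linarith
    have key : (1 - z₂ * t) ^ (-(1/3):ℝ) > (1 - z₁ * t) ^ (-(1/3):ℝ) := by
      apply Real.rpow_lt_rpow_of_neg h3 (by nlinarith [ht.1, ht.2]) (by norm_num)
    have hpos : 0 < t ^ (-(1/3):ℝ) * (1 - t) ^ (-(2/3):ℝ) :=
      mul_pos (Real.rpow_pos_of_pos ht.1 _) (Real.rpow_pos_of_pos (by linarith [ht.2]) _)
    unfold gg
    nlinarith [mul_lt_mul_of_pos_left key hpos]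
  rw [intervalIntegral.integral_sub (gg_integrable hz) (gg_integrable h1)] at hdiff
  simp only [Ifun]
  linarith

lemma Ifun_contAt {z₀ : ℝ} (hz : z₀ < 1) : ContinuousAt Ifun z₀ := by
  set w : ℝ := (1 + z₀) / 2 with hw
  have hwz : z₀ < w := by rw [hw]; linarith
  have hw1 : w < 1 := by rw [hw]; linarith
  apply intervalIntegral.continuousAt_of_dominated_interval
    (bound := gg w) (F := fun z t => gg z t)
  · filter_upwards [Iio_mem_nhds hwz] with z hz
    exact ((gg_integrable (lt_trans hz hw1)).def').aestronglyMeasurable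
  · filter_upwards [Iio_mem_nhds hwz] with z (hzw : z < w)
    filter_upwards with t ht
    rw [Set.uIoc_of_le (by norm_num : (0:ℝ) ≤ 1)] at ht
    have h0 : 0 ≤ gg z t := by
      unfold gg
      refine mul_nonneg (mul_nonneg (Real.rpow_nonneg ht.1.le _)
        (Real.rpow_nonneg (by linarith [ht.2]) _)) (Real.rpow_nonneg ?_ _)
      have := zt_lt_one (hzw.trans hw1) ht.1.le ht.2; linarith
    rw [Real.norm_eq_abs, abs_of_nonneg h0]
    unfold gg
    apply mul_le_mul_of_nonneg_left _ (mul_nonneg (Real.rpow_nonneg ht.1.le _)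
      (Real.rpow_nonneg (by linarith [ht.2]) _))
    have hb : 0 < 1 - w * t := by have := zt_lt_one hw1 ht.1.le ht.2; linarith
    exact Real.rpow_le_rpow_of_nonpos hb (by nlinarith [ht.1]) (by norm_num)
  · exact gg_integrable hw1
  · filter_upwards with t ht
    rw [Set.uIoc_of_le (by norm_num : (0:ℝ) ≤ 1)] at ht
    unfold gg
    apply ContinuousAt.mul continuousAt_const
    apply ContinuousAt.rpow_const
    · exact (continuous_const.sub (continuous_id.mul continuous_const)).continuousAt
    · left
      have := zt_lt_one hz ht.1.le ht.2
      intro h; nlinarith [h]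

lemma Ifun_lower {z : ℝ} (hz1 : 1/2 < z) (hz2 : z < 1) :
    2 ^ (-(1/3):ℝ) * Real.log ((1/2) / (1 - z)) ≤ Ifun z := by
  set ε : ℝ := 1 - z with hε
  have hε0 : 0 < ε := by rw [hε]; linarith
  have hε2 : ε < 1/2 := by rw [hε]; linarith
  -- step 1 : Ifun z ≥ ∫_{1/2}^{1-ε} gg z
  have hsub1 : IntervalIntegrable (gg z) volume 0 (1/2) :=
    (gg_integrable hz2).mono_set (by rw [Set.uIcc_of_le, Set.uIcc_of_le] <;> first
      | exact Set.Icc_subset_Icc (le_refl 0) (by norm_num) | norm_num)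
  have hsub2 : IntervalIntegrable (gg z) volume (1/2) (1 - ε) :=
    (gg_integrable hz2).mono_set (by
      rw [Set.uIcc_of_le (by linarith : (1:ℝ)/2 ≤ 1 - ε), Set.uIcc_of_le (by norm_num : (0:ℝ) ≤ 1)]
      exact Set.Icc_subset_Icc (by norm_num) (by linarith))
  have hsub3 : IntervalIntegrable (gg z) volume (1 - ε) 1 :=
    (gg_integrable hz2).mono_set (by
      rw [Set.uIcc_of_le (by linarith : 1 - ε ≤ 1), Set.uIcc_of_le (by norm_num : (0:ℝ) ≤ 1)]
      exact Set.Icc_subset_Icc (by linarith) (le_refl 1))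
  have gg_nonneg : ∀ t ∈ Set.Icc (0:ℝ) 1, 0 ≤ gg z t := by
    intro t ht
    refine mul_nonneg (mul_nonneg (Real.rpow_nonneg ht.1 _)
      (Real.rpow_nonneg (by linarith [ht.2]) _)) (Real.rpow_nonneg ?_ _)
    have := zt_lt_one hz2 ht.1 ht.2; linarith
  have split : Ifun z = (∫ t in (0:ℝ)..(1/2), gg z t) + (∫ t in (1/2:ℝ)..(1-ε), gg z t)
      + (∫ t in (1-ε:ℝ)..1, gg z t) := by
    rw [Ifun, ← intervalIntegral.integral_add_adjacent_intervals (hsub1.trans hsub2) hsub3,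
      ← intervalIntegral.integral_add_adjacent_intervals hsub1 hsub2]
  have pos1 : 0 ≤ ∫ t in (0:ℝ)..(1/2), gg z t := by
    apply intervalIntegral.integral_nonneg (by norm_num)
    intro t ht; exact gg_nonneg t ⟨ht.1, by linarith [ht.2]⟩
  have pos3 : 0 ≤ ∫ t in (1-ε:ℝ)..1, gg z t := by
    apply intervalIntegral.integral_nonneg (by linarith)
    intro t ht; exact gg_nonneg t ⟨by linarith [ht.1], ht.2⟩
  -- step 2 : pointwise lower bound on [1/2, 1-ε]
  have hmid : (∫ t in (1/2:ℝ)..(1-ε), 2 ^ (-(1/3):ℝ) * (1 - t)⁻¹)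
      ≤ ∫ t in (1/2:ℝ)..(1-ε), gg z t := by
    apply intervalIntegral.integral_mono_on (by linarith)
    · apply ContinuousOn.intervalIntegrable
      apply ContinuousOn.mul continuousOn_const
      apply ContinuousOn.inv₀ (continuous_const.sub continuous_id).continuousOn
      intro t ht
      rw [Set.uIcc_of_le (by linarith : (1:ℝ)/2 ≤ 1 - ε)] at ht
      have : t ≤ 1 - ε := ht.2
      intro h; have h' : (1:ℝ) - t = 0 := h; nlinarith [h']
    · exact hsub2
    · intro t ht
      have ht1 : 1/2 ≤ t := ht.1
      have ht2 : t ≤ 1 - ε := ht.2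
      have h1t : 0 < 1 - t := by linarith
      have hzt : 1 - z * t ≤ 2 * (1 - t) := by nlinarith
      have hzt0 : 0 < 1 - z * t := by
        have := zt_lt_one hz2 (by linarith) (by linarith); linarith
      have e1 : (2 * (1 - t)) ^ (-(1/3):ℝ) ≤ (1 - z * t) ^ (-(1/3):ℝ) :=
        Real.rpow_le_rpow_of_nonpos hzt0 hzt (by norm_num)
      have e2 : (2 * (1 - t)) ^ (-(1/3):ℝ) = 2 ^ (-(1/3):ℝ) * (1 - t) ^ (-(1/3):ℝ) :=
        Real.mul_rpow (by norm_num) h1t.le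
      have e3 : (1:ℝ) ≤ t ^ (-(1/3):ℝ) :=
        Real.one_le_rpow_of_pos_of_le_one_of_nonpos (by linarith) (by linarith) (by norm_num)
      have e4 : (1 - t) ^ (-(2/3):ℝ) * (1 - t) ^ (-(1/3):ℝ) = (1 - t)⁻¹ := by
        rw [← Real.rpow_add h1t]
        norm_num
        rw [Real.rpow_neg_one]
      calc 2 ^ (-(1/3):ℝ) * (1 - t)⁻¹
          = 1 * ((1 - t) ^ (-(2/3):ℝ) * (2 ^ (-(1/3):ℝ) * (1 - t) ^ (-(1/3):ℝ))) := by
            rw [one_mul, ← mul_assoc, mul_comm ((1-t) ^ (-(2/3):ℝ)), mul_assoc, e4]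
        _ ≤ t ^ (-(1/3):ℝ) * ((1 - t) ^ (-(2/3):ℝ) * ((1 - z * t) ^ (-(1/3):ℝ))) := by
            apply mul_le_mul e3 _ _ (by positivity)
            · apply mul_le_mul_of_nonneg_left _ (Real.rpow_nonneg h1t.le _)
              rw [← e2]; exact e1
            · positivity
        _ = gg z t := by rw [gg, mul_assoc]
  -- step 3 : compute the explicit integral
  have hcomp : (∫ t in (1/2:ℝ)..(1-ε), (1 - t)⁻¹) = Real.log ((1/2) / ε) := by
    have h0 : (0:ℝ) ∉ Set.uIcc ε (1/2) := by
      rw [Set.uIcc_of_le (by linarith : ε ≤ 1/2)]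
      intro h
      exact absurd h.1 (by linarith)
    rw [intervalIntegral.integral_comp_sub_left (fun u : ℝ => u⁻¹) 1,
      show (1:ℝ) - (1 - ε) = ε by ring, show (1:ℝ) - 1/2 = 1/2 by norm_num,
      integral_inv h0]
  have hconst : (∫ t in (1/2:ℝ)..(1-ε), 2 ^ (-(1/3):ℝ) * (1 - t)⁻¹)
      = 2 ^ (-(1/3):ℝ) * Real.log ((1/2) / ε) := by
    rw [intervalIntegral.integral_const_mul, hcomp]
  calc 2 ^ (-(1/3):ℝ) * Real.log ((1/2) / (1 - z))
      = ∫ t in (1/2:ℝ)..(1-ε), 2 ^ (-(1/3):ℝ) * (1 - t)⁻¹ := by rw [hconst]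
    _ ≤ ∫ t in (1/2:ℝ)..(1-ε), gg z t := hmid
    _ ≤ Ifun z := by rw [split]; linarith

lemma Ifun_tendsto_top : Tendsto Ifun (𝓝[<] (1:ℝ)) atTop := by
  have h1 : Tendsto (fun z : ℝ => 1 - z) (𝓝[<] (1:ℝ)) (𝓝[>] (0:ℝ)) := by
    apply tendsto_nhdsWithin_of_tendsto_nhds_of_eventually_within
    · have : Tendsto (fun z : ℝ => 1 - z) (𝓝 (1:ℝ)) (𝓝 (1 - 1)) :=
        (continuous_const.sub continuous_id).tendsto 1
      simpa using this.mono_left nhdsWithin_le_nhds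
    · filter_upwards [self_mem_nhdsWithin] with z (hz : z < 1)
      simpa using hz
  have h2 : Tendsto (fun z : ℝ => (1/2) / (1 - z)) (𝓝[<] (1:ℝ)) atTop := by
    have : Tendsto (fun x : ℝ => (1/2) / x) (𝓝[>] (0:ℝ)) atTop := by
      simp only [div_eq_mul_inv]
      exact tendsto_inv_nhdsGT_zero.const_mul_atTop (by norm_num)
    exact this.comp h1
  have h3 : Tendsto (fun z : ℝ => 2 ^ (-(1/3):ℝ) * Real.log ((1/2) / (1 - z)))
      (𝓝[<] (1:ℝ)) atTop := by
    apply Tendsto.const_mul_atTop (by positivity)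
    exact Real.tendsto_log_atTop.comp h2
  apply tendsto_atTop_mono' _ _ h3
  filter_upwards [Ioo_mem_nhdsLT_of_mem (by norm_num : (1:ℝ) ∈ Set.Ioc (1/2) 1)] with z hz
  exact Ifun_lower hz.1 hz.2

theorem stmt6 :
    StrictMonoOn fratio (Ioo (0:ℝ) 1) ∧
    ContinuousOn fratio (Ioo (0:ℝ) 1) ∧
    Set.BijOn fratio (Ioo (0:ℝ) 1) (Ioi (0:ℝ)) ∧
    ∀ r : ℝ, 0 < r → ∃! t, t ∈ Ioo (0:ℝ) 1 ∧ fratio t = r := by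
  have hpos : ∀ t ∈ Ioo (0:ℝ) 1, 0 < fratio t := by
    intro t ht
    rw [fratio_eq]
    exact div_pos (Ifun_pos ht.2) (Ifun_pos (by linarith [ht.1]))
  have hmono : StrictMonoOn fratio (Ioo (0:ℝ) 1) := by
    intro t₁ ht₁ t₂ ht₂ h12
    rw [fratio_eq, fratio_eq]
    rw [div_lt_div_iff₀ (Ifun_pos (by linarith [ht₁.1])) (Ifun_pos (by linarith [ht₂.1]))]
    have a1 : Ifun t₁ < Ifun t₂ := Ifun_strict_mono h12 ht₂.2
    have a2 : Ifun (1 - t₂) < Ifun (1 - t₁) := Ifun_strict_mono (by linarith) (by linarith [ht₁.1])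
    have p1 : 0 < Ifun t₁ := Ifun_pos ht₁.2
    have p2 : 0 < Ifun (1 - t₂) := Ifun_pos (by linarith [ht₂.1])
    nlinarith
  have hcont : ContinuousOn fratio (Ioo (0:ℝ) 1) := by
    have : ContinuousOn (fun t => Ifun t / Ifun (1 - t)) (Ioo (0:ℝ) 1) := by
      apply ContinuousOn.div
      · intro t ht
        exact (Ifun_contAt ht.2).continuousWithinAt
      · intro t ht
        exact (ContinuousAt.comp (Ifun_contAt (by show (1:ℝ) - t < 1; linarith [ht.1]))
          ((continuous_const.sub continuous_id).continuousAt)).continuousWithinAt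
      · intro t ht
        exact (Ifun_pos (show 1 - t < 1 by linarith [ht.1])).ne'
    exact this.congr fun t _ => fratio_eq t
  haveI n0 : Filter.NeBot (𝓝[Ioo (0:ℝ) 1] 0) := by
    apply mem_closure_iff_nhdsWithin_neBot.mp
    rw [closure_Ioo (by norm_num : (0:ℝ) ≠ 1)]
    exact ⟨le_refl 0, by norm_num⟩
  haveI n1 : Filter.NeBot (𝓝[Ioo (0:ℝ) 1] 1) := by
    apply mem_closure_iff_nhdsWithin_neBot.mp
    rw [closure_Ioo (by norm_num : (0:ℝ) ≠ 1)]
    exact ⟨by norm_num, le_refl 1⟩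
  have hsurj : ∀ r : ℝ, 0 < r → ∃ t ∈ Ioo (0:ℝ) 1, fratio t = r := by
    intro r hr
    -- near 1 : fratio ≥ r eventually
    have hev1 : ∀ᶠ t in 𝓝[Ioo (0:ℝ) 1] 1, r ≤ fratio t := by
      have hIt : ∀ᶠ t in 𝓝[<] (1:ℝ), r * Ifun (1/2) ≤ Ifun t :=
        Ifun_tendsto_top.eventually_ge_atTop _
      have hmem : Ioo (1/2 : ℝ) 1 ∈ 𝓝[<] (1:ℝ) :=
        Ioo_mem_nhdsLT_of_mem (by norm_num : (1:ℝ) ∈ Set.Ioc (1/2) 1)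
      have : ∀ᶠ t in 𝓝[<] (1:ℝ), t ∈ Ioo (0:ℝ) 1 → r ≤ fratio t := by
        filter_upwards [hIt, hmem] with t h1 h2 _
        rw [fratio_eq]
        rw [le_div_iff₀ (Ifun_pos (by linarith [h2.1]))]
        have hle : Ifun (1 - t) ≤ Ifun (1/2) := Ifun_mono (by linarith [h2.1]) (by norm_num)
        nlinarith [Ifun_pos (show (1:ℝ) - t < 1 by linarith [h2.1]), hr]
      have hmono2 : 𝓝[Ioo (0:ℝ) 1] (1:ℝ) ≤ 𝓝[<] (1:ℝ) :=
        nhdsWithin_mono _ (fun x hx => hx.2)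
      filter_upwards [this.filter_mono hmono2, self_mem_nhdsWithin] with t h1 h2
      exact h1 h2
    -- near 0 : fratio ≤ r eventually
    have hev0 : ∀ᶠ t in 𝓝[Ioo (0:ℝ) 1] 0, fratio t ≤ r := by
      have hIt : ∀ᶠ u in 𝓝[<] (1:ℝ), Ifun (1/2) / r ≤ Ifun u :=
        Ifun_tendsto_top.eventually_ge_atTop _
      have hcomp : Tendsto (fun t : ℝ => 1 - t) (𝓝[Ioo (0:ℝ) 1] 0) (𝓝[<] (1:ℝ)) := by
        apply tendsto_nhdsWithin_of_tendsto_nhds_of_eventually_within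
        · have : Tendsto (fun t : ℝ => 1 - t) (𝓝 (0:ℝ)) (𝓝 (1 - 0)) :=
            (continuous_const.sub continuous_id).tendsto 0
          simpa using this.mono_left nhdsWithin_le_nhds
        · filter_upwards [self_mem_nhdsWithin] with t ht
          simp only [Set.mem_Iio]
          linarith [ht.1]
      have hmem0 : Ioo (0:ℝ) (1/2) ∈ 𝓝[Ioo (0:ℝ) 1] (0:ℝ) := by
        apply mem_nhdsWithin.mpr
        exact ⟨Iio (1/2), isOpen_Iio, by norm_num, fun x hx => ⟨hx.2.1, hx.1⟩⟩
      filter_upwards [hcomp.eventually hIt, hmem0, self_mem_nhdsWithin] with t h1 h2 h3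
      rw [fratio_eq]
      rw [div_le_iff₀ (Ifun_pos (by linarith [h3.1]))]
      have hle : Ifun t ≤ Ifun (1/2) := Ifun_mono h2.2.le (by norm_num)
      have h4 : Ifun (1/2) ≤ r * Ifun (1 - t) := by
        rw [div_le_iff₀ hr] at h1
        nlinarith
      linarith
    obtain ⟨t, ht, hft⟩ := isPreconnected_Ioo.intermediate_value₂_eventually₂
      (le_principal_iff.mpr self_mem_nhdsWithin) (le_principal_iff.mpr self_mem_nhdsWithin)
      hcont continuousOn_const hev0 hev1
    exact ⟨t, ht, hft⟩
  refine ⟨hmono, hcont, ⟨fun t ht => hpos t ht, hmono.injOn, ?_⟩, ?_⟩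
  · intro r hr
    obtain ⟨t, ht, hft⟩ := hsurj r hr
    exact ⟨t, ht, hft⟩
  · intro r hr
    obtain ⟨t, ht, hft⟩ := hsurj r hr
    refine ⟨t, ⟨ht, hft⟩, ?_⟩
    rintro t' ⟨ht', hft'⟩
    exact hmono.injOn ht' ht (hft'.trans hft.symm)
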